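/- Let G = (V,E) be a finite simple graph, k a natural number, C ⊆ V a set of at least k+2 vertices inducing a clique in G, and F a set of unordered pairs of vertices with |F| ≤ k such that G △ F is a cluster graph. If s ∈ V ∖ C has at least k+1 neighbors (in G) inside C, then in G △ F the vertex s is adjacent to every vertex of C. -/

import Mathlib

namespace Paper

/-- The vertex set of the connected component of `v` in `G`. -/
def compSet {V : Type*} (G : SimpleGraph V) (v : V) : Set V := {w | G.Reachable v w}

/-- A cluster graph: no induced `P₃`; equivalently, every connected component induces a clique. -/
def IsClusterGraph {V : Type*} (G : SimpleGraph V) : Prop :=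
  ∀ ⦃x y z : V⦄, G.Adj x y → G.Adj y z → x ≠ z → G.Adj x z

/-- `G` is a disjoint union of cliques each having exactly `c` vertices: every connected
component induces a clique on exactly `c` vertices. -/
def IsUniformClusterGraph {V : Type*} (G : SimpleGraph V) (c : ℕ) : Prop :=
  ∀ v : V, G.IsClique (compSet G v) ∧ (compSet G v).ncard = c

/-- `G △ F`: the graph whose edge set is the symmetric difference of the edge set of `G`
and `F`. -/
def symmDiffGraph {V : Type*} (G : SimpleGraph V) (F : Set (Sym2 V)) : SimpleGraph V :=
  SimpleGraph.fromEdgeSet (symmDiff G.edgeSet F)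

/-- `G + F`: the graph whose edge set is the union of the edge set of `G` and `F`. -/
def addEdges {V : Type*} (G : SimpleGraph V) (F : Set (Sym2 V)) : SimpleGraph V :=
  SimpleGraph.fromEdgeSet (G.edgeSet ∪ F)

/-- If `C` is a clique of `G` on at least `k + 2` vertices, `|F| ≤ k`, `G △ F` is a cluster
graph, and `s ∉ C` has at least `k + 1` neighbors in `C` (in `G`), then in `G △ F` the
vertex `s` is adjacent to every vertex of `C`. -/
theorem stmt17 {V : Type*} [Fintype V] (G : SimpleGraph V) (k : ℕ)
    (C : Set V) (hCcard : k + 2 ≤ C.ncard) (hCclique : G.IsClique C)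
    (F : Finset (Sym2 V)) (hFdiag : ∀ e ∈ F, ¬ e.IsDiag) (hFcard : F.card ≤ k)
    (hcluster : IsClusterGraph (symmDiffGraph G (↑F : Set (Sym2 V))))
    (s : V) (hs : s ∉ C)
    (hnbr : k + 1 ≤ (C ∩ G.neighborSet s).ncard) :
    ∀ x ∈ C, (symmDiffGraph G (↑F : Set (Sym2 V))).Adj s x := by
  classical
  intro x hx
  have hsx : s ≠ x := fun h => hs (h ▸ hx)
  have hHadj : ∀ a b : V, G.Adj a b → s(a, b) ∉ F → (symmDiffGraph G (↑F : Set (Sym2 V))).Adj a b := by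
    intro a b hab hnF
    rw [symmDiffGraph, SimpleGraph.fromEdgeSet_adj]
    exact ⟨Set.mem_symmDiff.2 (Or.inl ⟨G.mem_edgeSet.2 hab, hnF⟩), hab.ne⟩
  by_cases hdir : G.Adj s x ∧ s(s, x) ∉ F
  · exact hHadj s x hdir.1 hdir.2
  -- set up the candidate set
  set N : Set V := (C ∩ G.neighborSet s) \ {x} with hN
  set Bad : Set V := {t ∈ N | s(s, t) ∈ F ∨ s(t, x) ∈ F} with hBad
  have hBadN : Bad ⊆ N := fun t ht => ht.1
  set q : Sym2 V := s(s, x) with hq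
  -- injection from Bad to F.erase q
  have hinj : Bad.ncard ≤ (↑(F.erase q) : Set (Sym2 V)).ncard := by
    apply Set.ncard_le_ncard_of_injOn (fun t => if s(s, t) ∈ F then s(s, t) else s(t, x))
    · intro t ht
      obtain ⟨⟨⟨htC, hts⟩, htx⟩, hor⟩ := ht
      have hts' : G.Adj s t := hts
      have htnx : t ≠ x := by simpa using htx
      have htns : t ≠ s := hts'.ne'
      by_cases h1 : s(s, t) ∈ F
      · simp only [h1, if_pos]
        refine Finset.mem_coe.2 (Finset.mem_erase.2 ⟨?_, h1⟩)
        rw [hq]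
        intro h
        rcases Sym2.eq_iff.1 h with ⟨_, h2⟩ | ⟨h2, _⟩
        · exact htnx h2
        · exact hsx h2
      · simp only [h1, if_neg, if_false]
        have h2 : s(t, x) ∈ F := hor.resolve_left h1
        refine Finset.mem_coe.2 (Finset.mem_erase.2 ⟨?_, h2⟩)
        rw [hq]
        intro h
        rcases Sym2.eq_iff.1 h with ⟨h3, _⟩ | ⟨h3, _⟩
        · exact htns h3
        · exact htnx h3
    · intro t ht t' ht' heq
      obtain ⟨⟨⟨htC, hts⟩, htx⟩, _⟩ := ht
      obtain ⟨⟨⟨htC', hts'⟩, htx'⟩, _⟩ := ht'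
      have hst : s ≠ t := fun h => (h ▸ hs) htC
      have hst' : s ≠ t' := fun h => (h ▸ hs) htC'
      simp only at heq
      by_cases h1 : s(s, t) ∈ F <;> by_cases h2 : s(s, t') ∈ F <;>
        simp only [h1, h2, if_pos, if_neg, if_false] at heq
      · rcases Sym2.eq_iff.1 heq with ⟨_, h⟩ | ⟨h, _⟩
        · exact h
        · exact absurd h hst'
      · rcases Sym2.eq_iff.1 heq with ⟨h, _⟩ | ⟨h, _⟩
        · exact absurd h hst'
        · exact absurd h hsx
      · rcases Sym2.eq_iff.1 heq with ⟨h, _⟩ | ⟨_, h⟩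
        · exact absurd h.symm hst
        · exact absurd h.symm hsx
      · rcases Sym2.eq_iff.1 heq with ⟨h, _⟩ | ⟨h, _⟩
        · exact h
        · exact absurd h (by simpa using htx)
  -- cardinality comparison
  have hcmp : Bad.ncard < N.ncard := by
    rw [Set.ncard_coe_finset] at hinj
    by_cases hx' : x ∈ C ∩ G.neighborSet s
    · have hqF : q ∈ F := by
        by_contra hqF
        exact hdir ⟨hx'.2, hqF⟩
      have hN1 : N.ncard = (C ∩ G.neighborSet s).ncard - 1 :=
        Set.ncard_diff_singleton_of_mem hx'
      have hE : (F.erase q).card < F.card := Finset.card_erase_lt_of_mem hqF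
      omega
    · have hN1 : N = C ∩ G.neighborSet s := Set.diff_singleton_eq_self (by simpa using hx')
      have hE : (F.erase q).card ≤ F.card := Finset.card_erase_le
      rw [hN1]
      omega
  -- extract a good vertex
  obtain ⟨t, htN, htB⟩ : ∃ t ∈ N, t ∉ Bad := by
    by_contra h
    push_neg at h
    exact absurd (Set.ncard_le_ncard h (Set.toFinite _)) (not_le.2 hcmp)
  obtain ⟨⟨htC, hts⟩, htx⟩ := htN
  have htnx : t ≠ x := by simpa using htx
  have hts' : G.Adj s t := hts
  have hFree : s(s, t) ∉ F ∧ s(t, x) ∉ F := by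
    by_contra h
    rw [not_and_or] at h
    exact htB ⟨⟨⟨htC, hts⟩, htx⟩, by tauto⟩
  have h1 : (symmDiffGraph G (↑F : Set (Sym2 V))).Adj s t := hHadj s t hts' hFree.1
  have h2 : (symmDiffGraph G (↑F : Set (Sym2 V))).Adj t x :=
    hHadj t x (hCclique htC hx htnx) hFree.2
  exact hcluster h1 h2 hsx

end Paper
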